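/- Let n ≥ 1, let γ_0, …, γ_{n−2} lie in the open unit disc, and let γ_{n−1} lie on the unit circle. Then the vector δ_{n−1} = (0, …, 0, 1) ∈ ℂ^n is a cyclic vector for the finite CMV matrix C_n(γ_0, …, γ_{n−1}), i.e., the vectors C_n^k δ_{n−1}, k ≥ 0, span ℂ^n. -/

import Mathlib

noncomputable def tauc (γ : ℂ) : ℂ := (Real.sqrt (1 - ‖γ‖ ^ 2) : ℝ)

/-- Entries of the semi-infinite CMV factor `L = Θ(γ₀) ⊕ Θ(γ₂) ⊕ ⋯`, where
`Θ(γ)` is the 2×2 matrix with rows `(conj γ, τ)`, `(τ, -γ)` and the block `Θ(γ_{2j})`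
occupies rows and columns `2j, 2j+1`. -/
noncomputable def Lent (γ : ℕ → ℂ) (i j : ℕ) : ℂ :=
  if i % 2 = 0 then
    if j = i then (starRingEnd ℂ) (γ i) else if j = i + 1 then tauc (γ i) else 0
  else
    if j = i - 1 then tauc (γ (i - 1)) else if j = i then -γ (i - 1) else 0

/-- Entries of the semi-infinite CMV factor `M = 1 ⊕ Θ(γ₁) ⊕ Θ(γ₃) ⊕ ⋯`, the block
`Θ(γ_{2j+1})` occupying rows and columns `2j+1, 2j+2`. -/
noncomputable def Ment (γ : ℕ → ℂ) (i j : ℕ) : ℂ :=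
  if i = 0 then (if j = 0 then 1 else 0)
  else if i % 2 = 1 then
    if j = i then (starRingEnd ℂ) (γ i) else if j = i + 1 then tauc (γ i) else 0
  else
    if j = i - 1 then tauc (γ (i - 1)) else if j = i then -γ (i - 1) else 0

/-- The `n × n` finite CMV matrix: the product of the upper-left `n × n` blocks of
`L` and `M`; when `|γ_{n-1}| = 1` this is the upper-left `n × n` block of the
semi-infinite product `L·M`. -/
noncomputable def CMVfin (γ : ℕ → ℂ) (n : ℕ) : Matrix (Fin n) (Fin n) ℂ :=
  (Matrix.of fun i j : Fin n => Lent γ i j) * (Matrix.of fun i j : Fin n => Ment γ i j)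

lemma Lent_supp {γ : ℕ → ℂ} {i k : ℕ} (h : Lent γ i k ≠ 0) :
    (i % 2 = 0 ∧ (k = i ∨ k = i + 1)) ∨ (i % 2 = 1 ∧ (k = i - 1 ∨ k = i)) := by
  unfold Lent at h
  split_ifs at h <;> simp_all <;> omega

lemma Ment_supp {γ : ℕ → ℂ} {i k : ℕ} (h : Ment γ i k ≠ 0) :
    (i = 0 ∧ k = 0) ∨ (i ≠ 0 ∧ i % 2 = 1 ∧ (k = i ∨ k = i + 1)) ∨
      (i ≠ 0 ∧ i % 2 = 0 ∧ (k = i - 1 ∨ k = i)) := by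
  unfold Ment at h
  split_ifs at h <;> simp_all <;> omega

lemma CMV_apply (γ : ℕ → ℂ) (n : ℕ) (i j : Fin n) :
    CMVfin γ n i j = ∑ k : Fin n, Lent γ (i:ℕ) (k:ℕ) * Ment γ (k:ℕ) (j:ℕ) := by
  simp [CMVfin, Matrix.mul_apply]

lemma CMV_zero {γ : ℕ → ℂ} {n : ℕ} (i j : Fin n)
    (hz : ((i:ℕ)+3 ≤ (j:ℕ)) ∨ ((j:ℕ)+3 ≤ (i:ℕ)) ∨ ((i:ℕ)%2 = 1 ∧ (j:ℕ) = (i:ℕ)+2)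
      ∨ ((i:ℕ)%2 = 0 ∧ (i:ℕ) = (j:ℕ)+2)) :
    CMVfin γ n i j = 0 := by
  rw [CMV_apply]
  apply Finset.sum_eq_zero
  intro k _
  by_cases hL : Lent γ (i:ℕ) (k:ℕ) = 0
  · simp [hL]
  by_cases hM : Ment γ (k:ℕ) (j:ℕ) = 0
  · simp [hM]
  exfalso
  have h1 := Lent_supp hL
  have h2 := Ment_supp hM
  omega

lemma CMV_single {γ : ℕ → ℂ} {n : ℕ} (i j a : Fin n)
    (hzero : ∀ k : Fin n, (k:ℕ) ≠ (a:ℕ) → Lent γ (i:ℕ) (k:ℕ) = 0 ∨ Ment γ (k:ℕ) (j:ℕ) = 0) :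
    CMVfin γ n i j = Lent γ (i:ℕ) (a:ℕ) * Ment γ (a:ℕ) (j:ℕ) := by
  rw [CMV_apply]
  apply Finset.sum_eq_single_of_mem a (Finset.mem_univ a)
  intro k _ hk
  rcases hzero k (fun h => hk (Fin.ext h)) with h | h <;> simp [h]

lemma CMV_V1 {γ : ℕ → ℂ} {n m : ℕ} (hm : m % 2 = 0) (h2 : m + 2 < n) :
    CMVfin γ n ⟨m, by omega⟩ ⟨m + 2, h2⟩ = tauc (γ m) * tauc (γ (m+1)) := by
  rw [CMV_single (a := ⟨m+1, by omega⟩)]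
  · show Lent γ m (m+1) * Ment γ (m+1) (m+2) = _
    unfold Lent Ment
    split_ifs <;> first | rfl | (exfalso; omega) | contradiction
  · intro k hk
    by_cases hL : Lent γ m (k:ℕ) = 0
    · exact Or.inl hL
    by_cases hM : Ment γ (k:ℕ) (m+2) = 0
    · exact Or.inr hM
    exfalso
    have hs1 := Lent_supp hL
    have hs2 := Ment_supp hM
    simp only at hk
    omega

lemma CMV_V2 {γ : ℕ → ℂ} {n m : ℕ} (hm : m % 2 = 1) (h2 : m + 2 < n) :
    CMVfin γ n ⟨m + 2, h2⟩ ⟨m, by omega⟩ = tauc (γ (m+1)) * tauc (γ m) := by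
  rw [CMV_single (a := ⟨m+1, by omega⟩)]
  · show Lent γ (m+2) (m+1) * Ment γ (m+1) m = _
    unfold Lent Ment
    split_ifs <;> first | rfl | (exfalso; omega) | contradiction
  · intro k hk
    by_cases hL : Lent γ (m+2) (k:ℕ) = 0
    · exact Or.inl hL
    by_cases hM : Ment γ (k:ℕ) m = 0
    · exact Or.inr hM
    exfalso
    have hs1 := Lent_supp hL
    have hs2 := Ment_supp hM
    simp only at hk
    omega

lemma CMV_V3 {γ : ℕ → ℂ} {n : ℕ} (hn : 2 ≤ n) (hpar : (n-1) % 2 = 0) :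
    CMVfin γ n ⟨n-1, by omega⟩ ⟨n-2, by omega⟩
      = (starRingEnd ℂ) (γ (n-1)) * tauc (γ (n-2)) := by
  rw [CMV_single (a := ⟨n-1, by omega⟩)]
  · show Lent γ (n-1) (n-1) * Ment γ (n-1) (n-2) = _
    unfold Lent Ment
    split_ifs <;> first | rfl | (exfalso; omega) | contradiction
  · intro k hk
    by_cases hL : Lent γ (n-1) (k:ℕ) = 0
    · exact Or.inl hL
    by_cases hM : Ment γ (k:ℕ) (n-2) = 0
    · exact Or.inr hM
    exfalso
    have hs1 := Lent_supp hL
    have hs2 := Ment_supp hM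
    have hs3 := k.isLt
    simp only at hk
    omega

lemma CMV_V4 {γ : ℕ → ℂ} {n : ℕ} (hn : 2 ≤ n) (hpar : (n-2) % 2 = 0) :
    CMVfin γ n ⟨n-2, by omega⟩ ⟨n-1, by omega⟩
      = tauc (γ (n-2)) * (starRingEnd ℂ) (γ (n-1)) := by
  rw [CMV_single (a := ⟨n-1, by omega⟩)]
  · show Lent γ (n-2) (n-1) * Ment γ (n-1) (n-1) = _
    unfold Lent Ment
    split_ifs <;> first | rfl | (exfalso; omega) | contradiction
  · intro k hk
    by_cases hL : Lent γ (n-2) (k:ℕ) = 0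
    · exact Or.inl hL
    by_cases hM : Ment γ (k:ℕ) (n-1) = 0
    · exact Or.inr hM
    exfalso
    have hs1 := Lent_supp hL
    have hs2 := Ment_supp hM
    have hs3 := k.isLt
    simp only at hk
    omega

open scoped Matrix

lemma tauc_conj (γ : ℂ) : (starRingEnd ℂ) (tauc γ) = tauc γ := Complex.conj_ofReal _

lemma tauc_ne_zero {γ : ℂ} (h : ‖γ‖ < 1) : tauc γ ≠ 0 := by
  have h1 : (0:ℝ) < 1 - ‖γ‖ ^ 2 := by nlinarith [norm_nonneg γ]
  simp only [tauc, ne_eq, Complex.ofReal_eq_zero]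
  exact (Real.sqrt_pos.mpr h1).ne'

lemma conj_mul_self (γ : ℂ) : (starRingEnd ℂ) γ * γ = ((‖γ‖ ^ 2 : ℝ) : ℂ) := by
  rw [mul_comm, Complex.mul_conj, Complex.normSq_eq_norm_sq]

lemma tauc_mul_self {γ : ℂ} (h : ‖γ‖ ≤ 1) :
    tauc γ * tauc γ = 1 - (starRingEnd ℂ) γ * γ := by
  have h1 : (0:ℝ) ≤ 1 - ‖γ‖ ^ 2 := by nlinarith [norm_nonneg γ]
  rw [conj_mul_self, tauc]
  rw [← Complex.ofReal_mul, Real.mul_self_sqrt h1]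
  push_cast; ring

lemma Lent_e1 {γ : ℕ → ℂ} {i : ℕ} (h : i % 2 = 0) : Lent γ i i = (starRingEnd ℂ) (γ i) := by
  unfold Lent; rw [if_pos h, if_pos rfl]
lemma Lent_e2 {γ : ℕ → ℂ} {i : ℕ} (h : i % 2 = 0) : Lent γ i (i+1) = tauc (γ i) := by
  unfold Lent; rw [if_pos h, if_neg (by omega), if_pos rfl]
lemma Lent_o1 {γ : ℕ → ℂ} {i : ℕ} (h : i % 2 = 1) : Lent γ i (i-1) = tauc (γ (i-1)) := by
  unfold Lent; rw [if_neg (by omega), if_pos rfl]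
lemma Lent_o2 {γ : ℕ → ℂ} {i : ℕ} (h : i % 2 = 1) : Lent γ i i = -γ (i-1) := by
  unfold Lent; rw [if_neg (by omega), if_neg (by omega), if_pos rfl]
lemma Ment_00 {γ : ℕ → ℂ} : Ment γ 0 0 = 1 := by unfold Ment; rw [if_pos rfl, if_pos rfl]
lemma Ment_o1 {γ : ℕ → ℂ} {i : ℕ} (h : i % 2 = 1) : Ment γ i i = (starRingEnd ℂ) (γ i) := by
  unfold Ment; rw [if_neg (by omega), if_pos h, if_pos rfl]
lemma Ment_o2 {γ : ℕ → ℂ} {i : ℕ} (h : i % 2 = 1) : Ment γ i (i+1) = tauc (γ i) := by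
  unfold Ment; rw [if_neg (by omega), if_pos h, if_neg (by omega), if_pos rfl]
lemma Ment_e1 {γ : ℕ → ℂ} {i : ℕ} (h : i % 2 = 0) (h0 : i ≠ 0) :
    Ment γ i (i-1) = tauc (γ (i-1)) := by
  unfold Ment; rw [if_neg h0, if_neg (by omega), if_pos rfl]
lemma Ment_e2 {γ : ℕ → ℂ} {i : ℕ} (h : i % 2 = 0) (h0 : i ≠ 0) : Ment γ i i = -γ (i-1) := by
  unfold Ment; rw [if_neg h0, if_neg (by omega), if_neg (by omega), if_pos rfl]

lemma sum_pair_helper {n : ℕ} (f : Fin n → ℂ) (a b : Fin n) (hab : a ≠ b)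
    (h0 : ∀ k, k ≠ a → k ≠ b → f k = 0) : ∑ k, f k = f a + f b := by
  rw [← Finset.sum_pair hab]
  refine (Finset.sum_subset (Finset.subset_univ _) ?_).symm
  intro k _ hk
  simp only [Finset.mem_insert, Finset.mem_singleton, not_or] at hk
  exact h0 k hk.1 hk.2

lemma L_unitary {γ : ℕ → ℂ} {n : ℕ} (hn : 1 ≤ n)
    (hγ : ∀ k < n - 1, ‖γ k‖ < 1) (hlast : ‖γ (n - 1)‖ = 1) :
    (Matrix.of fun i j : Fin n => Lent γ (i:ℕ) (j:ℕ)) *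
      (Matrix.of fun i j : Fin n => Lent γ (i:ℕ) (j:ℕ))ᴴ = 1 := by
  ext i j
  rw [Matrix.mul_apply]
  simp only [Matrix.conjTranspose_apply, Matrix.of_apply, Complex.star_def]
  by_cases hd : (i:ℕ) = (j:ℕ)
  · have hij : i = j := Fin.ext hd
    subst hij
    rw [Matrix.one_apply_eq]
    by_cases hpi : (i:ℕ) % 2 = 0
    · by_cases hb : (i:ℕ) + 1 < n
      · rw [sum_pair_helper _ i ⟨(i:ℕ)+1, hb⟩
          (Fin.ne_of_val_ne (show (i:ℕ) ≠ (i:ℕ)+1 by omega)) ?side]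
        case side =>
          intro k hk1 hk2
          by_cases hL : Lent γ (i:ℕ) (k:ℕ) = 0
          · simp [hL]
          exfalso
          have hs := Lent_supp hL
          have h1 : (k:ℕ) ≠ (i:ℕ) := fun h => hk1 (Fin.ext h)
          have h2 : (k:ℕ) ≠ (i:ℕ)+1 := fun h => hk2 (Fin.ext h)
          omega
        show Lent γ i i * _ + Lent γ i ((i:ℕ)+1) * _ = 1
        rw [Lent_e1 hpi, Lent_e2 hpi, tauc_conj, Complex.conj_conj]
        linear_combination tauc_mul_self (le_of_lt (hγ (i:ℕ) (by omega)))
      · rw [Finset.sum_eq_single_of_mem i (Finset.mem_univ i) ?side]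
        case side =>
          intro k _ hk
          by_cases hL : Lent γ (i:ℕ) (k:ℕ) = 0
          · simp [hL]
          exfalso
          have hs := Lent_supp hL
          have h1 : (k:ℕ) ≠ (i:ℕ) := fun h => hk (Fin.ext h)
          have h2 := k.isLt
          omega
        rw [Lent_e1 hpi, Complex.conj_conj]
        have hiv : (i:ℕ) = n - 1 := by have := i.isLt; omega
        rw [hiv, conj_mul_self, hlast]
        norm_num
    · have hpi' : (i:ℕ) % 2 = 1 := by omega
      rw [sum_pair_helper _ ⟨(i:ℕ)-1, by omega⟩ i
        (Fin.ne_of_val_ne (show (i:ℕ)-1 ≠ (i:ℕ) by omega)) ?side]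
      case side =>
        intro k hk1 hk2
        by_cases hL : Lent γ (i:ℕ) (k:ℕ) = 0
        · simp [hL]
        exfalso
        have hs := Lent_supp hL
        have h1 : (k:ℕ) ≠ (i:ℕ)-1 := fun h => hk1 (Fin.ext h)
        have h2 : (k:ℕ) ≠ (i:ℕ) := fun h => hk2 (Fin.ext h)
        omega
      show Lent γ i ((i:ℕ)-1) * _ + Lent γ i i * _ = 1
      rw [Lent_o1 hpi', Lent_o2 hpi', tauc_conj, map_neg]
      have hb : ‖γ ((i:ℕ)-1)‖ ≤ 1 := le_of_lt (hγ _ (by have := i.isLt; omega))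
      linear_combination tauc_mul_self hb
  · rw [Matrix.one_apply_ne (fun h => hd (congrArg Fin.val h))]
    by_cases hB : (i:ℕ) % 2 = 0 ∧ (j:ℕ) = (i:ℕ)+1
    · obtain ⟨hpi, hji⟩ := hB
      have hpj : (j:ℕ) % 2 = 1 := by omega
      rw [sum_pair_helper _ i j (fun h => hd (congrArg Fin.val h)) ?side]
      case side =>
        intro k hk1 hk2
        by_cases hL : Lent γ (i:ℕ) (k:ℕ) = 0
        · simp [hL]
        exfalso
        have hs := Lent_supp hL
        have h1 : (k:ℕ) ≠ (i:ℕ) := fun h => hk1 (Fin.ext h)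
        have h2 : (k:ℕ) ≠ (j:ℕ) := fun h => hk2 (Fin.ext h)
        omega
      rw [Lent_e1 hpi,
        show Lent γ (j:ℕ) (i:ℕ) = tauc (γ ((j:ℕ)-1)) from (by
          rw [← Lent_o1 hpj]; congr 1; omega),
        show Lent γ (i:ℕ) (j:ℕ) = tauc (γ (i:ℕ)) from (by rw [hji]; exact Lent_e2 hpi),
        Lent_o2 hpj, tauc_conj, map_neg]
      have hji' : (j:ℕ) - 1 = (i:ℕ) := by omega
      rw [hji']
      ring
    by_cases hC : (j:ℕ) % 2 = 0 ∧ (i:ℕ) = (j:ℕ)+1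
    · obtain ⟨hpj, hij⟩ := hC
      have hpi : (i:ℕ) % 2 = 1 := by omega
      rw [sum_pair_helper _ j i (fun h => hd (congrArg Fin.val h.symm)) ?side]
      case side =>
        intro k hk1 hk2
        by_cases hL : Lent γ (i:ℕ) (k:ℕ) = 0
        · simp [hL]
        exfalso
        have hs := Lent_supp hL
        have h1 : (k:ℕ) ≠ (j:ℕ) := fun h => hk1 (Fin.ext h)
        have h2 : (k:ℕ) ≠ (i:ℕ) := fun h => hk2 (Fin.ext h)
        omega
      rw [show Lent γ (i:ℕ) (j:ℕ) = tauc (γ ((i:ℕ)-1)) from (by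
          rw [← Lent_o1 hpi]; congr 1; omega),
        Lent_e1 hpj, Lent_o2 hpi,
        show Lent γ (j:ℕ) (i:ℕ) = tauc (γ (j:ℕ)) from (by rw [hij]; exact Lent_e2 hpj),
        Complex.conj_conj, tauc_conj]
      have hij' : (i:ℕ) - 1 = (j:ℕ) := by omega
      rw [hij']
      ring
    · apply Finset.sum_eq_zero
      intro k _
      by_cases hL : Lent γ (i:ℕ) (k:ℕ) = 0
      · simp [hL]
      by_cases hM : Lent γ (j:ℕ) (k:ℕ) = 0
      · simp [hM]
      exfalso
      have hs1 := Lent_supp hL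
      have hs2 := Lent_supp hM
      omega

lemma M_unitary {γ : ℕ → ℂ} {n : ℕ} (hn : 1 ≤ n)
    (hγ : ∀ k < n - 1, ‖γ k‖ < 1) (hlast : ‖γ (n - 1)‖ = 1) :
    (Matrix.of fun i j : Fin n => Ment γ (i:ℕ) (j:ℕ)) *
      (Matrix.of fun i j : Fin n => Ment γ (i:ℕ) (j:ℕ))ᴴ = 1 := by
  ext i j
  rw [Matrix.mul_apply]
  simp only [Matrix.conjTranspose_apply, Matrix.of_apply, Complex.star_def]
  by_cases hd : (i:ℕ) = (j:ℕ)
  · have hij : i = j := Fin.ext hd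
    subst hij
    rw [Matrix.one_apply_eq]
    by_cases h0 : (i:ℕ) = 0
    · rw [Finset.sum_eq_single_of_mem i (Finset.mem_univ i) ?side]
      case side =>
        intro k _ hk
        by_cases hM : Ment γ (i:ℕ) (k:ℕ) = 0
        · simp [hM]
        exfalso
        have hs := Ment_supp hM
        have h1 : (k:ℕ) ≠ (i:ℕ) := fun h => hk (Fin.ext h)
        omega
      rw [h0, Ment_00]
      simp
    · by_cases hpi : (i:ℕ) % 2 = 1
      · by_cases hb : (i:ℕ) + 1 < n
        · rw [sum_pair_helper _ i ⟨(i:ℕ)+1, hb⟩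
            (Fin.ne_of_val_ne (show (i:ℕ) ≠ (i:ℕ)+1 by omega)) ?side]
          case side =>
            intro k hk1 hk2
            by_cases hM : Ment γ (i:ℕ) (k:ℕ) = 0
            · simp [hM]
            exfalso
            have hs := Ment_supp hM
            have h1 : (k:ℕ) ≠ (i:ℕ) := fun h => hk1 (Fin.ext h)
            have h2 : (k:ℕ) ≠ (i:ℕ)+1 := fun h => hk2 (Fin.ext h)
            omega
          show Ment γ i i * _ + Ment γ i ((i:ℕ)+1) * _ = 1
          rw [Ment_o1 hpi, Ment_o2 hpi, tauc_conj, Complex.conj_conj]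
          linear_combination tauc_mul_self (le_of_lt (hγ (i:ℕ) (by omega)))
        · rw [Finset.sum_eq_single_of_mem i (Finset.mem_univ i) ?side]
          case side =>
            intro k _ hk
            by_cases hM : Ment γ (i:ℕ) (k:ℕ) = 0
            · simp [hM]
            exfalso
            have hs := Ment_supp hM
            have h1 : (k:ℕ) ≠ (i:ℕ) := fun h => hk (Fin.ext h)
            have h2 := k.isLt
            omega
          rw [Ment_o1 hpi, Complex.conj_conj]
          have hiv : (i:ℕ) = n - 1 := by have := i.isLt; omega
          rw [hiv, conj_mul_self, hlast]
          norm_num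
      · have hpi' : (i:ℕ) % 2 = 0 := by omega
        rw [sum_pair_helper _ ⟨(i:ℕ)-1, by omega⟩ i
          (Fin.ne_of_val_ne (show (i:ℕ)-1 ≠ (i:ℕ) by omega)) ?side]
        case side =>
          intro k hk1 hk2
          by_cases hM : Ment γ (i:ℕ) (k:ℕ) = 0
          · simp [hM]
          exfalso
          have hs := Ment_supp hM
          have h1 : (k:ℕ) ≠ (i:ℕ)-1 := fun h => hk1 (Fin.ext h)
          have h2 : (k:ℕ) ≠ (i:ℕ) := fun h => hk2 (Fin.ext h)
          omega
        show Ment γ i ((i:ℕ)-1) * _ + Ment γ i i * _ = 1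
        rw [Ment_e1 hpi' h0, Ment_e2 hpi' h0, tauc_conj, map_neg]
        have hb : ‖γ ((i:ℕ)-1)‖ ≤ 1 := le_of_lt (hγ _ (by have := i.isLt; omega))
        linear_combination tauc_mul_self hb
  · rw [Matrix.one_apply_ne (fun h => hd (congrArg Fin.val h))]
    by_cases hB : (i:ℕ) % 2 = 1 ∧ (j:ℕ) = (i:ℕ)+1
    · obtain ⟨hpi, hji⟩ := hB
      have hpj : (j:ℕ) % 2 = 0 := by omega
      have hj0 : (j:ℕ) ≠ 0 := by omega
      rw [sum_pair_helper _ i j (fun h => hd (congrArg Fin.val h)) ?side]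
      case side =>
        intro k hk1 hk2
        by_cases hM : Ment γ (i:ℕ) (k:ℕ) = 0
        · simp [hM]
        exfalso
        have hs := Ment_supp hM
        have h1 : (k:ℕ) ≠ (i:ℕ) := fun h => hk1 (Fin.ext h)
        have h2 : (k:ℕ) ≠ (j:ℕ) := fun h => hk2 (Fin.ext h)
        omega
      rw [Ment_o1 hpi,
        show Ment γ (j:ℕ) (i:ℕ) = tauc (γ ((j:ℕ)-1)) from (by
          rw [← Ment_e1 hpj hj0]; congr 1; omega),
        show Ment γ (i:ℕ) (j:ℕ) = tauc (γ (i:ℕ)) from (by rw [hji]; exact Ment_o2 hpi),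
        Ment_e2 hpj hj0, tauc_conj, map_neg]
      have hji' : (j:ℕ) - 1 = (i:ℕ) := by omega
      rw [hji']
      ring
    by_cases hC : (j:ℕ) % 2 = 1 ∧ (i:ℕ) = (j:ℕ)+1
    · obtain ⟨hpj, hij⟩ := hC
      have hpi : (i:ℕ) % 2 = 0 := by omega
      have hi0 : (i:ℕ) ≠ 0 := by omega
      rw [sum_pair_helper _ j i (fun h => hd (congrArg Fin.val h.symm)) ?side]
      case side =>
        intro k hk1 hk2
        by_cases hM : Ment γ (i:ℕ) (k:ℕ) = 0
        · simp [hM]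
        exfalso
        have hs := Ment_supp hM
        have h1 : (k:ℕ) ≠ (j:ℕ) := fun h => hk1 (Fin.ext h)
        have h2 : (k:ℕ) ≠ (i:ℕ) := fun h => hk2 (Fin.ext h)
        omega
      rw [show Ment γ (i:ℕ) (j:ℕ) = tauc (γ ((i:ℕ)-1)) from (by
          rw [← Ment_e1 hpi hi0]; congr 1; omega),
        Ment_o1 hpj, Ment_e2 hpi hi0,
        show Ment γ (j:ℕ) (i:ℕ) = tauc (γ (j:ℕ)) from (by rw [hij]; exact Ment_o2 hpj),
        Complex.conj_conj, tauc_conj]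
      have hij' : (i:ℕ) - 1 = (j:ℕ) := by omega
      rw [hij']
      ring
    · apply Finset.sum_eq_zero
      intro k _
      by_cases hM1 : Ment γ (i:ℕ) (k:ℕ) = 0
      · simp [hM1]
      by_cases hM2 : Ment γ (j:ℕ) (k:ℕ) = 0
      · simp [hM2]
      exfalso
      have hs1 := Ment_supp hM1
      have hs2 := Ment_supp hM2
      omega

lemma CMV_unitary {γ : ℕ → ℂ} {n : ℕ} (hn : 1 ≤ n)
    (hγ : ∀ k < n - 1, ‖γ k‖ < 1) (hlast : ‖γ (n - 1)‖ = 1) :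
    (CMVfin γ n)ᴴ * CMVfin γ n = 1 := by
  have hL := mul_eq_one_comm.mp (L_unitary hn hγ hlast)
  have hM := mul_eq_one_comm.mp (M_unitary hn hγ hlast)
  unfold CMVfin
  rw [Matrix.conjTranspose_mul, Matrix.mul_assoc, ← Matrix.mul_assoc _ _ (Matrix.of fun i j : Fin n => Ment γ (i:ℕ) (j:ℕ)), hL, Matrix.one_mul, hM]

lemma reduce {n : ℕ} (S : Submodule ℂ (Fin n → ℂ)) (v : Fin n → ℂ) (j0 : Fin n)
    (c : ℂ) (hc : c ≠ 0) (hv : v ∈ S)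
    (hhi : ∀ i : Fin n, (j0:ℕ) < (i:ℕ) → (Pi.single i 1 : Fin n → ℂ) ∈ S)
    (hmid : v j0 = c) (hlo : ∀ i : Fin n, (i:ℕ) < (j0:ℕ) → v i = 0) :
    (Pi.single j0 1 : Fin n → ℂ) ∈ S := by
  classical
  set w : Fin n → ℂ :=
    ∑ i ∈ Finset.univ.filter (fun i : Fin n => (j0:ℕ) < (i:ℕ)),
      v i • (Pi.single i 1 : Fin n → ℂ) with hw
  have hwS : w ∈ S :=
    Submodule.sum_mem _ (fun i hi => Submodule.smul_mem _ _ (hhi i (by simpa using hi)))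
  have hwt : ∀ t : Fin n, w t = if (j0:ℕ) < (t:ℕ) then v t else 0 := by
    intro t
    rw [hw, Finset.sum_apply]
    simp only [Pi.smul_apply, Pi.single_apply, smul_eq_mul, mul_ite, mul_one, mul_zero]
    rw [Finset.sum_ite_eq (Finset.univ.filter (fun i : Fin n => (j0:ℕ) < (i:ℕ))) t v]
    simp
  have key : (Pi.single j0 1 : Fin n → ℂ) = c⁻¹ • (v - w) := by
    funext t
    simp only [Pi.smul_apply, Pi.sub_apply, smul_eq_mul, hwt t]
    rcases lt_trichotomy ((t:ℕ)) ((j0:ℕ)) with h | h | h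
    · rw [if_neg (by omega), Pi.single_eq_of_ne (fun hh => by rw [hh] at h; omega), hlo t h]
      ring
    · have : t = j0 := Fin.ext h
      subst this
      rw [if_neg (by omega), Pi.single_eq_same, hmid]
      rw [sub_zero, inv_mul_cancel₀ hc]
    · rw [if_pos h, Pi.single_eq_of_ne (fun hh => by rw [hh] at h; omega)]
      ring
  rw [key]
  exact Submodule.smul_mem _ _ (Submodule.sub_mem _ hv hwS)

/-- (Used in the proof of **Theorem 1.3**.) If `γ_0, …, γ_{n-2} ∈ 𝔻` and
`γ_{n-1} ∈ ∂𝔻`, then `δ_{n-1}` is a cyclic vector for the finite CMV matrix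
`C_n(γ_0, …, γ_{n-1})`. -/
theorem cmvFin_deltaLast_cyclic
    (n : ℕ) (hn : 1 ≤ n) (γ : ℕ → ℂ)
    (hγ : ∀ k < n - 1, ‖γ k‖ < 1)
    (hlast : ‖γ (n - 1)‖ = 1) :
    Submodule.span ℂ {x : Fin n → ℂ | ∃ k : ℕ,
      x = ((CMVfin γ n) ^ k).mulVec
        (Pi.single (⟨n - 1, Nat.sub_lt hn Nat.one_pos⟩ : Fin n) 1)} = ⊤ := by
  classical
  set A := CMVfin γ n with hAdef
  set jlast : Fin n := ⟨n - 1, Nat.sub_lt hn Nat.one_pos⟩ with hjlast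
  set S := Submodule.span ℂ {x : Fin n → ℂ | ∃ k : ℕ,
      x = (A ^ k).mulVec (Pi.single jlast 1)} with hS
  have hC : Aᴴ * A = 1 := CMV_unitary hn hγ hlast
  -- membership of the cyclic vector
  have hδS : (Pi.single jlast 1 : Fin n → ℂ) ∈ S :=
    Submodule.subset_span ⟨0, by rw [pow_zero, Matrix.one_mulVec]⟩
  -- S is invariant under A
  have hmapLe : S.map A.mulVecLin ≤ S := by
    rw [hS, Submodule.map_span]
    refine Submodule.span_le.mpr ?_
    rintro y ⟨x, ⟨k, rfl⟩, rfl⟩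
    refine Submodule.subset_span ⟨k + 1, ?_⟩
    rw [Matrix.mulVecLin_apply, Matrix.mulVec_mulVec, ← pow_succ']
  have hmapA : ∀ x ∈ S, A.mulVec x ∈ S := fun x hx =>
    hmapLe (Submodule.mem_map_of_mem hx)
  -- injectivity of A
  have hAH : ∀ z : Fin n → ℂ, Aᴴ.mulVec (A.mulVec z) = z := by
    intro z
    rw [Matrix.mulVec_mulVec, hC, Matrix.one_mulVec]
  have hinj : Function.Injective A.mulVecLin := by
    intro x y hxy
    have hxy' : A.mulVec x = A.mulVec y := by
      rwa [Matrix.mulVecLin_apply, Matrix.mulVecLin_apply] at hxy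
    calc x = Aᴴ.mulVec (A.mulVec x) := (hAH x).symm
    _ = Aᴴ.mulVec (A.mulVec y) := by rw [hxy']
    _ = y := hAH y
  have hmapEq : S.map A.mulVecLin = S :=
    Submodule.eq_of_le_of_finrank_le hmapLe
      (le_of_eq (Submodule.equivMapOfInjective A.mulVecLin hinj S).finrank_eq)
  -- S is invariant under Aᴴ
  have hmapAH : ∀ x ∈ S, Aᴴ.mulVec x ∈ S := by
    intro x hx
    rw [← hmapEq] at hx
    obtain ⟨y, hy, rfl⟩ := hx
    rw [Matrix.mulVecLin_apply, hAH]
    exact hy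
  have mvs : ∀ (B : Matrix (Fin n) (Fin n) ℂ) (j i : Fin n),
      (B.mulVec (Pi.single j 1)) i = B i j := by
    intro B j i
    simp [Matrix.mulVec_single]
  -- the downward induction
  have main : ∀ d : ℕ, ∀ j : Fin n, n ≤ (j:ℕ) + 1 + d → (Pi.single j 1 : Fin n → ℂ) ∈ S := by
    intro d
    induction d using Nat.strong_induction_on with
    | _ d IH =>
    intro j hj
    by_cases hbase : n ≤ (j:ℕ) + 1
    · have hjv : j = jlast := Fin.ext (by have h : (jlast:ℕ) = n-1 := rfl; have := j.isLt; omega)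
      rw [hjv]
      exact hδS
    push_neg at hbase
    by_cases hd' : n ≤ (j:ℕ) + 1 + (d - 1)
    · exact IH (d - 1) (by omega) j hd'
    have hdn : (j:ℕ) + 1 + d = n := by omega
    have hhi : ∀ i : Fin n, (j:ℕ) < (i:ℕ) → (Pi.single i 1 : Fin n → ℂ) ∈ S := by
      intro i hi
      exact IH (n - 1 - (i:ℕ)) (by omega) i (by have := i.isLt; omega)
    by_cases h2 : (j:ℕ) + 2 < n
    · -- generic step
      set jj : Fin n := ⟨(j:ℕ) + 2, h2⟩ with hjj
      have hjjS : (Pi.single jj 1 : Fin n → ℂ) ∈ S := hhi jj (by have h : (jj:ℕ) = (j:ℕ)+2 := rfl; omega)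
      by_cases hpar : (j:ℕ) % 2 = 0
      · refine reduce S (A.mulVec (Pi.single jj 1)) j
          (tauc (γ (j:ℕ)) * tauc (γ ((j:ℕ)+1)))
          (mul_ne_zero (tauc_ne_zero (hγ _ (by omega))) (tauc_ne_zero (hγ _ (by omega))))
          (hmapA _ hjjS) hhi ?_ ?_
        · rw [mvs]
          exact CMV_V1 hpar h2
        · intro i hi
          rw [mvs]
          exact CMV_zero i jj (by have h : (jj:ℕ) = (j:ℕ)+2 := rfl; omega)
      · refine reduce S (Aᴴ.mulVec (Pi.single jj 1)) j
          (tauc (γ ((j:ℕ)+1)) * tauc (γ (j:ℕ)))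
          (mul_ne_zero (tauc_ne_zero (hγ _ (by omega))) (tauc_ne_zero (hγ _ (by omega))))
          (hmapAH _ hjjS) hhi ?_ ?_
        · rw [mvs, Matrix.conjTranspose_apply, Complex.star_def,
            show A jj j = tauc (γ ((j:ℕ)+1)) * tauc (γ (j:ℕ)) from CMV_V2 (by omega) h2,
            map_mul, tauc_conj, tauc_conj]
        · intro i hi
          rw [mvs, Matrix.conjTranspose_apply, Complex.star_def,
            show A jj i = 0 from CMV_zero jj i (by have h : (jj:ℕ) = (j:ℕ)+2 := rfl; omega), map_zero]
    · -- boundary step: j = n - 2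
      have hj2 : (j:ℕ) + 2 = n := by omega
      have hn2 : 2 ≤ n := by omega
      have hγne : γ (n - 1) ≠ 0 := fun h => by rw [h] at hlast; simp at hlast
      have hjeq : j = (⟨n - 2, by omega⟩ : Fin n) := Fin.ext (show (j:ℕ) = n-2 by omega)
      by_cases hpar : (n - 1) % 2 = 1
      · -- n even : use A · δ_last
        refine reduce S (A.mulVec (Pi.single jlast 1)) j
          (tauc (γ (n-2)) * (starRingEnd ℂ) (γ (n-1)))
          (mul_ne_zero (tauc_ne_zero (hγ _ (by omega)))
            (fun h => hγne (by simpa using h)))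
          (hmapA _ hδS) hhi ?_ ?_
        · rw [mvs, hjeq]
          exact CMV_V4 hn2 (by omega)
        · intro i hi
          rw [mvs]
          exact CMV_zero i jlast (by have h : (jlast:ℕ) = n-1 := rfl; omega)
      · -- n odd : use Aᴴ · δ_last
        refine reduce S (Aᴴ.mulVec (Pi.single jlast 1)) j
          (γ (n-1) * tauc (γ (n-2)))
          (mul_ne_zero hγne (tauc_ne_zero (hγ _ (by omega))))
          (hmapAH _ hδS) hhi ?_ ?_
        · rw [mvs, Matrix.conjTranspose_apply, Complex.star_def, hjeq,
            show A jlast (⟨n - 2, by omega⟩ : Fin n)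
                = (starRingEnd ℂ) (γ (n-1)) * tauc (γ (n-2)) from CMV_V3 hn2 (by omega),
            map_mul, tauc_conj, Complex.conj_conj]
        · intro i hi
          rw [mvs, Matrix.conjTranspose_apply, Complex.star_def,
            show A jlast i = 0 from CMV_zero jlast i (by have h : (jlast:ℕ) = n-1 := rfl; omega), map_zero]
  -- conclude
  rw [eq_top_iff]
  intro x _
  have hx : x = ∑ i : Fin n, x i • (Pi.single i 1 : Fin n → ℂ) := by
    funext t
    rw [Finset.sum_apply]
    simp only [Pi.smul_apply, Pi.single_apply, smul_eq_mul, mul_ite, mul_one, mul_zero]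
    rw [Finset.sum_ite_eq Finset.univ t x]
    simp
  rw [hx]
  exact Submodule.sum_mem _ (fun i _ => Submodule.smul_mem _ _ (main n i (by omega)))
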